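/- arXiv:1605.09069 — 3 statements merged into one kernel-verified Lean document; each statement's English description precedes it below -/
import Mathlib

section
/- Let G be a group with a finite bound on the orders of its finite subgroups. Then the product of any two finite normal subgroups of G is a finite normal subgroup, and G has a unique maximal finite normal subgroup Δ⁺(G), i.e., a finite normal subgroup containing every finite normal subgroup of G. -/
open scoped Pointwise

/-- In a group `G` with a finite bound on the orders of finite subgroups, the product of
two finite normal subgroups is a finite normal subgroup, and `G` has a unique maximal
finite normal subgroup `Δ⁺(G)`. -/
theorem stmt3 (G : Type*) [Group G] (N : ℕ)
    (hbound : ∀ H : Subgroup G, (H : Set G).Finite → Nat.card H ≤ N) :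
    (∀ A B : Subgroup G, A.Normal → B.Normal → (A : Set G).Finite → (B : Set G).Finite →
      ∃ C : Subgroup G, C.Normal ∧ (C : Set G).Finite ∧
        (C : Set G) = (A : Set G) * (B : Set G)) ∧
    (∃! D : Subgroup G, D.Normal ∧ (D : Set G).Finite ∧
      ∀ E : Subgroup G, E.Normal → (E : Set G).Finite → E ≤ D) := by
  classical
  have key : ∀ A B : Subgroup G, A.Normal → B.Normal → (A : Set G).Finite → (B : Set G).Finite →
      (A ⊔ B).Normal ∧ ((A ⊔ B : Subgroup G) : Set G).Finite ∧
        ((A ⊔ B : Subgroup G) : Set G) = (A : Set G) * (B : Set G) := by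
    intro A B hA hB hAf hBf
    have : B.Normal := hB
    refine ⟨(by haveI := hA; haveI := hB; exact Subgroup.sup_normal A B), ?_, Subgroup.mul_normal A B⟩
    rw [Subgroup.mul_normal A B]
    exact hAf.mul hBf
  refine ⟨fun A B hA hB hAf hBf => ⟨A ⊔ B, key A B hA hB hAf hBf⟩, ?_⟩
  set P : ℕ → Prop := fun n => ∃ D : Subgroup G, D.Normal ∧ (D : Set G).Finite ∧ Nat.card D = n
  have hbotf : ((⊥ : Subgroup G) : Set G).Finite := by simp
  have hPbot : P (Nat.card (⊥ : Subgroup G)) := ⟨⊥, inferInstance, hbotf, rfl⟩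
  have hPn : P (Nat.findGreatest P N) :=
    Nat.findGreatest_spec (hbound ⊥ hbotf) hPbot
  obtain ⟨D, hDn, hDf, hDc⟩ := hPn
  have hmax : ∀ E : Subgroup G, E.Normal → (E : Set G).Finite → E ≤ D := by
    intro E hEn hEf
    obtain ⟨hn1, hn2, hn3⟩ := key D E hDn hEn hDf hEf
    -- card (D ⊔ E) ≤ findGreatest
    have hle : Nat.card (D ⊔ E : Subgroup G) ≤ Nat.findGreatest P N := by
      apply Nat.le_findGreatest (hbound _ hn2) ⟨D ⊔ E, hn1, hn2, rfl⟩
    have hsub : (D : Set G) ⊆ ((D ⊔ E : Subgroup G) : Set G) :=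
      SetLike.coe_subset_coe.mpr le_sup_left
    have hcard : ((D ⊔ E : Subgroup G) : Set G).ncard ≤ (D : Set G).ncard := by
      rw [← Nat.card_coe_set_eq, ← Nat.card_coe_set_eq]
      exact hDc ▸ hle
    have heq : (D : Set G) = ((D ⊔ E : Subgroup G) : Set G) :=
      Set.eq_of_subset_of_ncard_le hsub hcard hn2
    have : D = D ⊔ E := SetLike.coe_injective heq
    exact le_trans le_sup_right this.ge
  refine ⟨D, ⟨hDn, hDf, hmax⟩, ?_⟩
  rintro D' ⟨hD'n, hD'f, hD'max⟩
  exact le_antisymm (hmax D' hD'n hD'f) (hD'max D hDn hDf)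
end

section
/- Let G be a group with maximal finite normal subgroup Δ⁺(G) and let M be a finite subgroup of maximal order among finite subgroups of G. Then there exist finitely many elements g₁,…,gₙ ∈ G such that Δ⁺(G) = ⋂_{k=1}^{n} g_k M g_k⁻¹. -/
open Pointwise

/-- If `D = Δ⁺(G)` is the maximal finite normal subgroup of `G` (orders of finite
subgroups being bounded) and `M` is a finite subgroup of maximal order, then `D` is the
intersection of finitely many conjugates of `M`. -/
theorem stmt5 (G : Type*) [Group G] (N : ℕ)
    (hbound : ∀ H : Subgroup G, (H : Set G).Finite → Nat.card H ≤ N)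
    (D : Subgroup G) (hDnorm : D.Normal) (hDfin : (D : Set G).Finite)
    (hDmax : ∀ E : Subgroup G, E.Normal → (E : Set G).Finite → E ≤ D)
    (M : Subgroup G) (hMfin : (M : Set G).Finite)
    (hMmax : ∀ H : Subgroup G, (H : Set G).Finite → Nat.card H ≤ Nat.card M) :
    ∃ (n : ℕ) (_ : 0 < n) (g : Fin n → G),
      D = ⨅ k : Fin n, Subgroup.map (MulAut.conj (g k)).toMonoidHom M := by
  set f : G → Subgroup G := fun g => M.map (MulAut.conj g).toMonoidHom with hf
  have hffin : ∀ g, ((f g : Set G)).Finite := by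
    intro g
    simpa [hf, Subgroup.coe_map] using hMfin.image _
  have hfcard : ∀ g, Nat.card (f g) = Nat.card M := by
    intro g
    exact (Nat.card_congr (M.equivMapOfInjective _ ((MulAut.conj g).injective)).toEquiv).symm
  -- D is contained in every conjugate of M
  have hDle : ∀ g : G, D ≤ f g := by
    intro g
    have hset : ((f g ⊔ D : Subgroup G) : Set G) = (f g : Set G) * (D : Set G) :=
      Subgroup.mul_normal (f g) D
    have hfin : ((f g ⊔ D : Subgroup G) : Set G).Finite := by
      rw [hset]; exact (hffin g).mul hDfin
    have hcard : Nat.card (f g ⊔ D : Subgroup G) ≤ Nat.card (f g) := by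
      rw [hfcard g]; exact hMmax _ hfin
    have hsub : (f g : Set G) ⊆ ((f g ⊔ D : Subgroup G) : Set G) :=
      SetLike.coe_subset_coe.2 le_sup_left
    have hncard : ((f g ⊔ D : Subgroup G) : Set G).ncard ≤ (f g : Set G).ncard := by
      rw [← Nat.card_coe_set_eq, ← Nat.card_coe_set_eq]
      exact hcard
    have heq := Set.eq_of_subset_of_ncard_le hsub hncard hfin
    intro x hx
    have hx2 : x ∈ ((f g ⊔ D : Subgroup G) : Set G) := SetLike.coe_subset_coe.2 le_sup_right hx
    rw [← heq] at hx2
    exact hx2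
  -- choose a finite intersection of minimal cardinality
  set S : Set ℕ := {m | ∃ n : ℕ, ∃ _ : 0 < n, ∃ g : Fin n → G,
      m = Nat.card (⨅ k, f (g k) : Subgroup G)} with hS
  have hSne : S.Nonempty := ⟨_, 1, one_pos, fun _ => 1, rfl⟩
  obtain ⟨n, hn, g, hg⟩ := Nat.sInf_mem hSne
  set K : Subgroup G := ⨅ k, f (g k) with hK
  have hKfin : (K : Set G).Finite :=
    (hffin (g ⟨0, hn⟩)).subset (SetLike.coe_subset_coe.2 (iInf_le _ (⟨0, hn⟩ : Fin n)))
  -- K is contained in every conjugate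
  have hKle : ∀ g' : G, K ≤ f g' := by
    intro g'
    have key : (⨅ k : Fin (n+1), f ((Fin.cons g' g : Fin (n+1) → G) k) : Subgroup G) = f g' ⊓ K := by
      apply le_antisymm
      · refine le_inf ?_ (le_iInf fun k => ?_)
        · simpa using iInf_le (fun k : Fin (n+1) => f ((Fin.cons g' g : Fin (n+1) → G) k)) 0
        · simpa using iInf_le (fun k : Fin (n+1) => f ((Fin.cons g' g : Fin (n+1) → G) k)) k.succ
      · refine le_iInf fun k => ?_
        refine Fin.cases ?_ (fun i => ?_) k
        · simpa using inf_le_left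
        · simpa using le_trans inf_le_right (iInf_le _ i)
    have hmem : Nat.card (f g' ⊓ K : Subgroup G) ∈ S :=
      ⟨n+1, Nat.succ_pos n, (Fin.cons g' g : Fin (n+1) → G), by rw [key]⟩
    have hle : Nat.card K ≤ Nat.card (f g' ⊓ K : Subgroup G) := by
      rw [← hg]; exact Nat.sInf_le hmem
    have hsub : ((f g' ⊓ K : Subgroup G) : Set G) ⊆ (K : Set G) :=
      SetLike.coe_subset_coe.2 inf_le_right
    have hncard : (K : Set G).ncard ≤ ((f g' ⊓ K : Subgroup G) : Set G).ncard := by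
      rw [← Nat.card_coe_set_eq, ← Nat.card_coe_set_eq]
      exact hle
    have heq := Set.eq_of_subset_of_ncard_le hsub hncard hKfin
    intro x hx
    have hx2 : x ∈ ((f g' ⊓ K : Subgroup G) : Set G) := by rw [heq]; exact hx
    exact (inf_le_left : f g' ⊓ K ≤ f g') hx2
  -- the full intersection is a finite normal subgroup, hence ≤ D
  set Kfull : Subgroup G := ⨅ g' : G, f g' with hKfull
  have hKfullnorm : Kfull.Normal := by
    constructor
    intro x hx h
    refine Subgroup.mem_iInf.2 fun g' => ?_
    have hx' : x ∈ f (h⁻¹ * g') := Subgroup.mem_iInf.1 hx _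
    obtain ⟨m, hm, hmx⟩ := hx'
    refine ⟨m, hm, ?_⟩
    simp only [MulEquiv.coe_toMonoidHom, MulAut.conj_apply] at hmx ⊢
    rw [← hmx]
    group
  have hKfullfin : (Kfull : Set G).Finite :=
    (hffin 1).subset (SetLike.coe_subset_coe.2 (iInf_le _ 1))
  have hKfullD : Kfull ≤ D := hDmax _ hKfullnorm hKfullfin
  refine ⟨n, hn, g, le_antisymm (le_iInf fun k => hDle (g k)) ?_⟩
  exact le_trans (le_iInf hKle) hKfullD
end

section
/- Let G be a finite group and K a subfield of ℂ closed under complex conjugation. For every matrix A ∈ Mat_n(K[G]), the orthogonal projection onto the kernel of A (acting on K[G]^n with the inner product making the group-element basis orthonormal) has matrix entries in K[G], i.e., pr_{ker A} ∈ Mat_n(K[G]). -/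
set_option synthInstance.maxHeartbeats 1000000
set_option maxHeartbeats 1000000

/-- The star operation `(∑ a_g g)* = ∑ conj(a_g) g⁻¹` on `ℂ[G]`. -/
noncomputable def gaStar {G : Type*} [Group G] (f : MonoidAlgebra ℂ G) :
    MonoidAlgebra ℂ G :=
  MonoidAlgebra.ofCoeff
    (Finsupp.equivMapDomain (Equiv.inv G) (f.coeff.mapRange (starRingEnd ℂ) (map_zero _)))

namespace Stmt17Aux

variable {G : Type*} [Group G]

lemma gaStar_apply (f : MonoidAlgebra ℂ G) (g : G) :
    (gaStar f).coeff g = starRingEnd ℂ (f.coeff g⁻¹) := by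
  simp [gaStar, MonoidAlgebra.coeff_ofCoeff, Finsupp.equivMapDomain_apply, Finsupp.mapRange_apply]

lemma gaStar_zero : gaStar (0 : MonoidAlgebra ℂ G) = 0 := by
  ext g; simp [gaStar_apply]

lemma gaStar_add (f h : MonoidAlgebra ℂ G) : gaStar (f + h) = gaStar f + gaStar h := by
  ext g
  simp only [MonoidAlgebra.coeff_add, Finsupp.add_apply, gaStar_apply, map_add]

lemma gaStar_smul (z : ℂ) (f : MonoidAlgebra ℂ G) :
    gaStar (z • f) = (starRingEnd ℂ z) • gaStar f := by
  ext g
  simp only [MonoidAlgebra.coeff_smul, Finsupp.smul_apply, gaStar_apply, smul_eq_mul, map_mul]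

lemma gaStar_single (k : G) (c : ℂ) :
    gaStar (MonoidAlgebra.single k c : MonoidAlgebra ℂ G)
      = MonoidAlgebra.single k⁻¹ (starRingEnd ℂ c) := by
  classical
  ext g
  rw [gaStar_apply]
  rw [MonoidAlgebra.coeff_single, MonoidAlgebra.coeff_single, Finsupp.single_apply,
    Finsupp.single_apply]
  by_cases h : k⁻¹ = g
  · rw [if_pos h, if_pos (by rw [← h]; simp)]
  · rw [if_neg h, if_neg (fun hk => h (by rw [hk]; simp)), map_zero]

lemma gaStar_one : gaStar (1 : MonoidAlgebra ℂ G) = 1 := by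
  rw [MonoidAlgebra.one_def]
  rw [gaStar_single]
  simp [MonoidAlgebra.one_def]

lemma gaStar_gaStar (f : MonoidAlgebra ℂ G) : gaStar (gaStar f) = f := by
  ext g; simp [gaStar_apply]

lemma gaStar_mul (a b : MonoidAlgebra ℂ G) : gaStar (a * b) = gaStar b * gaStar a := by
  induction a using MonoidAlgebra.induction_linear with
  | zero => simp [gaStar_zero]
  | add f h hf hh => rw [add_mul, gaStar_add, hf, hh, gaStar_add, mul_add]
  | single h c =>
    induction b using MonoidAlgebra.induction_linear with
    | zero => simp [gaStar_zero]
    | add f g hf hg => rw [mul_add, gaStar_add, hf, hg, gaStar_add, add_mul]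
    | single k d =>
      rw [MonoidAlgebra.single_mul_single, gaStar_single, gaStar_single, gaStar_single,
        MonoidAlgebra.single_mul_single, mul_inv_rev, map_mul,
        mul_comm (starRingEnd ℂ c)]

lemma gaStar_sum {ι : Type*} (s : Finset ι) (f : ι → MonoidAlgebra ℂ G) :
    gaStar (∑ i ∈ s, f i) = ∑ i ∈ s, gaStar (f i) := by
  classical
  induction s using Finset.induction with
  | empty => simp [gaStar_zero]
  | insert _ _ h ih => rw [Finset.sum_insert h, Finset.sum_insert h, gaStar_add, ih]


section
variable [Fintype G]
set_option linter.unusedSectionVars false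

noncomputable def innG (u v : MonoidAlgebra ℂ G) : ℂ :=
  ∑ g : G, starRingEnd ℂ (u.coeff g) * v.coeff g

lemma innG_zero_left (v : MonoidAlgebra ℂ G) : innG 0 v = 0 := by simp [innG]
lemma innG_zero_right (u : MonoidAlgebra ℂ G) : innG u 0 = 0 := by simp [innG]

lemma innG_add_left (u u' v : MonoidAlgebra ℂ G) : innG (u + u') v = innG u v + innG u' v := by
  simp [innG, MonoidAlgebra.coeff_add, add_mul, Finset.sum_add_distrib]

lemma innG_add_right (u v v' : MonoidAlgebra ℂ G) : innG u (v + v') = innG u v + innG u v' := by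
  simp [innG, MonoidAlgebra.coeff_add, mul_add, Finset.sum_add_distrib]

lemma innG_sum_left {ι : Type*} (s : Finset ι) (f : ι → MonoidAlgebra ℂ G) (v : MonoidAlgebra ℂ G) :
    innG (∑ i ∈ s, f i) v = ∑ i ∈ s, innG (f i) v := by
  classical
  induction s using Finset.induction with
  | empty => simp [innG_zero_left]
  | insert _ _ h ih => rw [Finset.sum_insert h, Finset.sum_insert h, innG_add_left, ih]

lemma innG_sum_right {ι : Type*} (s : Finset ι) (u : MonoidAlgebra ℂ G) (f : ι → MonoidAlgebra ℂ G) :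
    innG u (∑ i ∈ s, f i) = ∑ i ∈ s, innG u (f i) := by
  classical
  induction s using Finset.induction with
  | empty => simp [innG_zero_right]
  | insert _ _ h ih => rw [Finset.sum_insert h, Finset.sum_insert h, innG_add_right, ih]

lemma innG_mul_right (u v a : MonoidAlgebra ℂ G) :
    innG (u * a) v = innG u (v * gaStar a) := by
  induction a using MonoidAlgebra.induction_linear with
  | zero => rw [mul_zero, gaStar_zero, mul_zero, innG_zero_left, innG_zero_right]
  | add f h hf hh =>
      rw [mul_add, gaStar_add, mul_add, innG_add_left, innG_add_right, hf, hh]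
  | single k d =>
      rw [gaStar_single]
      unfold innG
      refine Fintype.sum_equiv (Equiv.mulRight k⁻¹) _ _ fun g => ?_
      simp only [Equiv.coe_mulRight, MonoidAlgebra.mul_single_apply, inv_inv, map_mul,
        inv_mul_cancel_right]
      ring

variable {n : ℕ}

noncomputable def innV (x y : Fin n → MonoidAlgebra ℂ G) : ℂ := ∑ i, innG (x i) (y i)

lemma innV_zero_right (x : Fin n → MonoidAlgebra ℂ G) : innV x 0 = 0 := by
  simp [innV, innG_zero_right]

lemma eq_zero_of_innV_self {x : Fin n → MonoidAlgebra ℂ G} (h : innV x x = 0) : x = 0 := by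
  have e1 : innV x x = ((∑ i, ∑ g : G, Complex.normSq ((x i).coeff g) : ℝ) : ℂ) := by
    unfold innV innG
    push_cast
    refine Finset.sum_congr rfl fun i _ => Finset.sum_congr rfl fun g _ => ?_
    rw [mul_comm, Complex.mul_conj]
  rw [e1] at h
  have h2 : (∑ i, ∑ g : G, Complex.normSq ((x i).coeff g) : ℝ) = 0 := by exact_mod_cast h
  have h3 : ∀ i ∈ (Finset.univ : Finset (Fin n)),
      (∑ g : G, Complex.normSq ((x i).coeff g) : ℝ) = 0 := by
    refine (Finset.sum_eq_zero_iff_of_nonneg fun i _ => ?_).mp h2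
    exact Finset.sum_nonneg fun g _ => Complex.normSq_nonneg _
  funext i
  ext g
  have h4 := (Finset.sum_eq_zero_iff_of_nonneg
    (fun g _ => Complex.normSq_nonneg ((x i).coeff g))).mp (h3 i (Finset.mem_univ i)) g
    (Finset.mem_univ g)
  have h5 : (x i).coeff g = 0 := Complex.normSq_eq_zero.mp h4
  simpa using h5

noncomputable def matStar (M : Matrix (Fin n) (Fin n) (MonoidAlgebra ℂ G)) :
    Matrix (Fin n) (Fin n) (MonoidAlgebra ℂ G) :=
  Matrix.of fun i j => gaStar (M j i)

lemma matStar_apply (M : Matrix (Fin n) (Fin n) (MonoidAlgebra ℂ G)) (i j : Fin n) :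
    matStar M i j = gaStar (M j i) := rfl

lemma matStar_zero : matStar (0 : Matrix (Fin n) (Fin n) (MonoidAlgebra ℂ G)) = 0 := by
  ext i j; simp [matStar_apply, gaStar_zero]

lemma matStar_add (M N : Matrix (Fin n) (Fin n) (MonoidAlgebra ℂ G)) :
    matStar (M + N) = matStar M + matStar N := by
  ext i j; simp [matStar_apply, gaStar_add]

lemma matStar_sum {ι : Type*} (s : Finset ι) (f : ι → Matrix (Fin n) (Fin n) (MonoidAlgebra ℂ G)) :
    matStar (∑ i ∈ s, f i) = ∑ i ∈ s, matStar (f i) := by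
  classical
  induction s using Finset.induction with
  | empty => simp [matStar_zero]
  | insert _ _ h ih => rw [Finset.sum_insert h, Finset.sum_insert h, matStar_add, ih]

lemma matStar_smul (z : ℂ) (M : Matrix (Fin n) (Fin n) (MonoidAlgebra ℂ G)) :
    matStar (z • M) = (starRingEnd ℂ z) • matStar M := by
  ext i j; simp [matStar_apply, gaStar_smul]

lemma matStar_matStar (M : Matrix (Fin n) (Fin n) (MonoidAlgebra ℂ G)) :
    matStar (matStar M) = M := by
  ext i j; simp [matStar_apply, gaStar_gaStar]

lemma matStar_one : matStar (1 : Matrix (Fin n) (Fin n) (MonoidAlgebra ℂ G)) = 1 := by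
  ext i j
  rw [matStar_apply, Matrix.one_apply, Matrix.one_apply]
  by_cases h : i = j
  · rw [if_pos h.symm, if_pos h, gaStar_one]
  · rw [if_neg (Ne.symm h), if_neg h, gaStar_zero]

lemma matStar_mul (M N : Matrix (Fin n) (Fin n) (MonoidAlgebra ℂ G)) :
    matStar (M * N) = matStar N * matStar M := by
  ext i j
  rw [matStar_apply, Matrix.mul_apply, Matrix.mul_apply, gaStar_sum]
  simp only [gaStar_mul, matStar_apply]

lemma matStar_pow (M : Matrix (Fin n) (Fin n) (MonoidAlgebra ℂ G)) (k : ℕ) :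
    matStar (M ^ k) = (matStar M) ^ k := by
  induction k with
  | zero => simpa using matStar_one
  | succ k ih => rw [pow_succ, matStar_mul, ih, pow_succ']


lemma innV_vecMul (x y : Fin n → MonoidAlgebra ℂ G)
    (M : Matrix (Fin n) (Fin n) (MonoidAlgebra ℂ G)) :
    innV (Matrix.vecMul x M) y = innV x (Matrix.vecMul y (matStar M)) := by
  unfold innV
  trans (∑ j, ∑ i, innG (x i * M i j) (y j))
  · refine Finset.sum_congr rfl fun j _ => ?_
    rw [show Matrix.vecMul x M j = ∑ i, x i * M i j from rfl, innG_sum_left]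
  · rw [Finset.sum_comm]
    refine Finset.sum_congr rfl fun i _ => ?_
    rw [show Matrix.vecMul y (matStar M) i = ∑ j, y j * gaStar (M i j) from rfl, innG_sum_right]
    exact Finset.sum_congr rfl fun j _ => innG_mul_right _ _ _

open Polynomial in
lemma matStar_aeval {B : Matrix (Fin n) (Fin n) (MonoidAlgebra ℂ G)} (hB : matStar B = B)
    (p : Polynomial ℂ) :
    matStar (Polynomial.aeval B p) = Polynomial.aeval B (p.map (starRingEnd ℂ)) := by
  rw [Polynomial.aeval_eq_sum_range (x := B) (p := p),
      Polynomial.aeval_eq_sum_range (x := B) (p := p.map (starRingEnd ℂ)),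
      Polynomial.natDegree_map, matStar_sum]
  refine Finset.sum_congr rfl fun k _ => ?_
  rw [matStar_smul, matStar_pow, hB, Polynomial.coeff_map]

lemma vecMul_smul_mat (c : ℂ) (x : Fin n → MonoidAlgebra ℂ G)
    (M : Matrix (Fin n) (Fin n) (MonoidAlgebra ℂ G)) :
    Matrix.vecMul x (c • M) = c • Matrix.vecMul x M := by
  funext j
  rw [show Matrix.vecMul x (c • M) j = ∑ i, x i * (c • M) i j from rfl, Pi.smul_apply,
    show Matrix.vecMul x M j = ∑ i, x i * M i j from rfl, Finset.smul_sum]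
  refine Finset.sum_congr rfl fun i _ => ?_
  rw [Matrix.smul_apply, mul_smul_comm]

lemma vecMul_smul_vec (c : ℂ) (x : Fin n → MonoidAlgebra ℂ G)
    (M : Matrix (Fin n) (Fin n) (MonoidAlgebra ℂ G)) :
    Matrix.vecMul (c • x) M = c • Matrix.vecMul x M := by
  funext j
  rw [show Matrix.vecMul (c • x) M j = ∑ i, (c • x) i * M i j from rfl, Pi.smul_apply,
    show Matrix.vecMul x M j = ∑ i, x i * M i j from rfl, Finset.smul_sum]
  refine Finset.sum_congr rfl fun i _ => ?_
  rw [Pi.smul_apply, smul_mul_assoc]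

lemma vecMul_sum_mat {ι : Type*} (s : Finset ι) (x : Fin n → MonoidAlgebra ℂ G)
    (f : ι → Matrix (Fin n) (Fin n) (MonoidAlgebra ℂ G)) :
    Matrix.vecMul x (∑ i ∈ s, f i) = ∑ i ∈ s, Matrix.vecMul x (f i) := by
  classical
  induction s using Finset.induction with
  | empty => simp [Matrix.vecMul_zero]
  | insert _ _ h ih => rw [Finset.sum_insert h, Finset.sum_insert h, Matrix.vecMul_add, ih]

lemma vecMul_single (M : Matrix (Fin n) (Fin n) (MonoidAlgebra ℂ G)) (i : Fin n) :
    Matrix.vecMul (Pi.single i (1 : MonoidAlgebra ℂ G)) M = M i := by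
  classical
  funext j
  have e : Matrix.vecMul (Pi.single i (1 : MonoidAlgebra ℂ G)) M j
      = ∑ k, (Pi.single i (1 : MonoidAlgebra ℂ G) : Fin n → MonoidAlgebra ℂ G) k * M k j := rfl
  rw [e, Finset.sum_eq_single i]
  · rw [Pi.single_eq_same, one_mul]
  · intro k _ hk; rw [Pi.single_eq_of_ne hk, zero_mul]
  · intro h; exact absurd (Finset.mem_univ i) h

lemma matrix_eq_zero_of_vecMul {M : Matrix (Fin n) (Fin n) (MonoidAlgebra ℂ G)}
    (h : ∀ x, Matrix.vecMul x M = 0) : M = 0 := by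
  apply Matrix.ext
  intro i j
  have h2 := congrFun (h (Pi.single i 1)) j
  rw [vecMul_single] at h2
  simpa using h2

lemma vecMul_pow {B : Matrix (Fin n) (Fin n) (MonoidAlgebra ℂ G)}
    {x : Fin n → MonoidAlgebra ℂ G} (h : Matrix.vecMul x B = 0) {k : ℕ} (hk : k ≠ 0) :
    Matrix.vecMul x (B ^ k) = 0 := by
  obtain ⟨k, rfl⟩ := Nat.exists_eq_succ_of_ne_zero hk
  rw [pow_succ', ← Matrix.vecMul_vecMul, h, Matrix.zero_vecMul]

lemma vecMul_aeval {B : Matrix (Fin n) (Fin n) (MonoidAlgebra ℂ G)}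
    {x : Fin n → MonoidAlgebra ℂ G} (h : Matrix.vecMul x B = 0) (p : Polynomial ℂ) :
    Matrix.vecMul x (Polynomial.aeval B p) = p.coeff 0 • x := by
  rw [Polynomial.aeval_eq_sum_range, vecMul_sum_mat]
  refine (Finset.sum_eq_single 0 ?_ ?_).trans ?_
  · intro k _ hk
    rw [vecMul_smul_mat, vecMul_pow h hk, smul_zero]
  · intro hmem; exact absurd (Finset.mem_range.mpr (Nat.succ_pos _)) hmem
  · rw [vecMul_smul_mat, pow_zero, Matrix.vecMul_one]

lemma vecMul_eq_zero_of_sq {B : Matrix (Fin n) (Fin n) (MonoidAlgebra ℂ G)}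
    (hB : matStar B = B) {z : Fin n → MonoidAlgebra ℂ G}
    (h : Matrix.vecMul (Matrix.vecMul z B) B = 0) : Matrix.vecMul z B = 0 := by
  apply eq_zero_of_innV_self
  rw [innV_vecMul z (Matrix.vecMul z B) B, hB, h, innV_zero_right]

lemma vecMul_A_of_vecMul_B {A : Matrix (Fin n) (Fin n) (MonoidAlgebra ℂ G)}
    {x : Fin n → MonoidAlgebra ℂ G} (h : Matrix.vecMul x (A * matStar A) = 0) :
    Matrix.vecMul x A = 0 := by
  apply eq_zero_of_innV_self
  rw [innV_vecMul x (Matrix.vecMul x A) A, Matrix.vecMul_vecMul, h, innV_zero_right]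

lemma smul_vec_eq_zero {c : ℂ} (hc : c ≠ 0) {v : Fin n → MonoidAlgebra ℂ G}
    (h : c • v = 0) : v = 0 := by
  funext j
  have h1 := congrFun h j
  rw [Pi.smul_apply, Pi.zero_apply] at h1
  ext g
  have h2 := congrArg (fun f : MonoidAlgebra ℂ G => f.coeff g) h1
  simp only [MonoidAlgebra.coeff_smul, MonoidAlgebra.coeff_zero, Finsupp.smul_apply,
    Finsupp.coe_zero, Pi.zero_apply, smul_eq_mul] at h2
  rcases mul_eq_zero.mp h2 with h3 | h3
  · exact absurd h3 hc
  · simpa using h3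

end
end Stmt17Aux

open Stmt17Aux Polynomial

/-- Let `G` be a finite group and `K ⊆ ℂ` a subfield closed under complex conjugation.
For every matrix `A ∈ Mat_n(K[G])`, the orthogonal projection onto `ker A` (the
self-adjoint idempotent matrix `P` whose fixed row vectors are exactly the kernel of
`A`, for the inner product making the group-element basis orthonormal) again has all
its entries in `K[G]`. -/
theorem stmt17 (G : Type*) [Group G] [Fintype G] (K : Subfield ℂ)
    (hK : ∀ x ∈ K, starRingEnd ℂ x ∈ K) (n : ℕ)
    (A : Matrix (Fin n) (Fin n) (MonoidAlgebra ℂ G))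
    (hA : ∀ i j g, (A i j).coeff g ∈ K) :
    ∃ P : Matrix (Fin n) (Fin n) (MonoidAlgebra ℂ G),
      (∀ i j g, (P i j).coeff g ∈ K) ∧
      P * P = P ∧
      (∀ i j, gaStar (P i j) = P j i) ∧
      ∀ x : Fin n → MonoidAlgebra ℂ G,
        Matrix.vecMul x A = 0 ↔ Matrix.vecMul x P = x := by
  classical
  -- the conjugation automorphism of K
  let τ : K →+* K :=
    { toFun := fun c => ⟨starRingEnd ℂ (c : ℂ), hK _ c.2⟩
      map_one' := by ext : 1; push_cast; simp
      map_mul' := fun a b => by ext : 1; push_cast; simp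
      map_zero' := by ext : 1; push_cast; simp
      map_add' := fun a b => by ext : 1; push_cast; simp }
  have hcoe : ∀ y : K, algebraMap K ℂ y = (y : ℂ) := fun y => rfl
  -- the adjoint matrix and the self-adjoint positive matrix B
  set B : Matrix (Fin n) (Fin n) (MonoidAlgebra ℂ G) := A * matStar A with hBdef
  have hBs : matStar B = B := by
    rw [hBdef, matStar_mul, matStar_matStar]
  -- K-coefficient model
  haveI : Module.Finite K (MonoidAlgebra K G) :=
    Module.Finite.of_basis (MonoidAlgebra.basis G K)
  haveI : Module.Finite K (Matrix (Fin n) (Fin n) (MonoidAlgebra K G)) := inferInstance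
  set ψ : MonoidAlgebra K G →ₐ[K] MonoidAlgebra ℂ G :=
    MonoidAlgebra.lift K (MonoidAlgebra ℂ G) G (MonoidAlgebra.of ℂ G) with hψdef
  have hψ : ∀ (f : MonoidAlgebra K G) (g : G), (ψ f).coeff g = (f.coeff g : ℂ) := by
    intro f
    induction f using MonoidAlgebra.induction_linear with
    | zero => intro g; rw [map_zero]; simp
    | add f h hf hh =>
        intro g
        rw [map_add, MonoidAlgebra.coeff_add, MonoidAlgebra.coeff_add, Finsupp.add_apply,
          Finsupp.add_apply, hf, hh]
        push_cast; ring
    | single a b =>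
        intro g
        rw [hψdef]
        rw [MonoidAlgebra.lift_single]
        rw [show MonoidAlgebra.of ℂ G a = MonoidAlgebra.single a 1 from rfl]
        rw [show ((b • MonoidAlgebra.single a (1:ℂ) : MonoidAlgebra ℂ G).coeff g)
            = b • ((MonoidAlgebra.single a (1:ℂ) : MonoidAlgebra ℂ G).coeff g) from rfl]
        rw [show (b • ((MonoidAlgebra.single a (1:ℂ) : MonoidAlgebra ℂ G).coeff g) : ℂ)
            = (b : ℂ) * ((MonoidAlgebra.single a (1:ℂ) : MonoidAlgebra ℂ G).coeff g) from
          Algebra.smul_def b _]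
        rw [MonoidAlgebra.coeff_single, MonoidAlgebra.coeff_single, Finsupp.single_apply,
          Finsupp.single_apply]
        split_ifs with h <;> simp
  set φ : Matrix (Fin n) (Fin n) (MonoidAlgebra K G) →ₐ[K] Matrix (Fin n) (Fin n) (MonoidAlgebra ℂ G) :=
    AlgHom.mapMatrix ψ with hφdef
  have hφ : ∀ (M : Matrix (Fin n) (Fin n) (MonoidAlgebra K G)) i j g,
      ((φ M) i j).coeff g = (((M i j).coeff g : K) : ℂ) := by
    intro M i j g
    rw [hφdef, AlgHom.mapMatrix_apply, Matrix.map_apply, hψ]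
  have hinj : Function.Injective φ := by
    intro M N h
    apply Matrix.ext
    intro i j
    ext g
    have h1 := congrArg (fun X : Matrix (Fin n) (Fin n) (MonoidAlgebra ℂ G) => (X i j).coeff g) h
    rw [hφ, hφ] at h1
    exact_mod_cast h1
  -- lift of A and of its star
  set A₀ : Matrix (Fin n) (Fin n) (MonoidAlgebra K G) :=
    Matrix.of fun i j => MonoidAlgebra.ofCoeff
        (Finsupp.equivFunOnFinite.symm (fun g => (⟨(A i j).coeff g, hA i j g⟩ : K)))
    with hA₀def
  have hA₀ : φ A₀ = A := by
    apply Matrix.ext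
    intro i j
    ext g
    rw [hφ, hA₀def]
    rfl
  set S₀ : Matrix (Fin n) (Fin n) (MonoidAlgebra K G) :=
    Matrix.of fun i j => MonoidAlgebra.ofCoeff (Finsupp.equivFunOnFinite.symm
      (fun g => (⟨starRingEnd ℂ ((A j i).coeff g⁻¹), hK _ (hA j i g⁻¹)⟩ : K)))
    with hS₀def
  have hS₀ : φ S₀ = matStar A := by
    apply Matrix.ext
    intro i j
    ext g
    rw [hφ, hS₀def, matStar_apply, gaStar_apply]
    rfl
  set B₀ : Matrix (Fin n) (Fin n) (MonoidAlgebra K G) := A₀ * S₀ with hB₀def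
  have hB₀ : φ B₀ = B := by rw [hB₀def, map_mul, hA₀, hS₀, hBdef]
  -- minimal polynomial of B₀ over K
  have hint : IsIntegral K B₀ := IsIntegral.of_finite K B₀
  set m : Polynomial K := minpoly K B₀ with hmdef
  have hmmonic : m.Monic := minpoly.monic hint
  have hm0 : Polynomial.aeval B₀ m = 0 := minpoly.aeval K B₀
  set mc : Polynomial ℂ := m.map (algebraMap K ℂ) with hmcdef
  have hmB : Polynomial.aeval B mc = 0 := by
    rw [hmcdef, Polynomial.aeval_map_algebraMap, ← hB₀, Polynomial.aeval_algHom_apply, hm0,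
      map_zero]
  have hτcomp : (algebraMap K ℂ).comp τ = (starRingEnd ℂ).comp (algebraMap K ℂ) :=
    RingHom.ext fun c => rfl
  -- realness of m
  have haem : Polynomial.aeval B₀ (m.map τ) = 0 := by
    have h1 : Polynomial.aeval B ((m.map τ).map (algebraMap K ℂ)) = 0 := by
      rw [Polynomial.map_map, hτcomp, ← Polynomial.map_map, ← hmcdef,
        ← matStar_aeval hBs, hmB, matStar_zero]
    rw [Polynomial.aeval_map_algebraMap, ← hB₀, Polynomial.aeval_algHom_apply] at h1
    exact hinj (by rw [h1, map_zero])
  have hmτ : m.map τ = m := by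
    refine minpoly.unique K B₀ (hmmonic.map τ) haem fun p hp hp0 => ?_
    have hdeg : (m.map τ).degree = m.degree := Polynomial.degree_map m τ
    rw [hdeg, hmdef]
    exact minpoly.min K B₀ hp hp0
  have hreal : mc.map (starRingEnd ℂ) = mc := by
    rw [hmcdef, Polynomial.map_map, ← hτcomp, ← Polynomial.map_map, hmτ]
  -- case split on the constant coefficient of m
  by_cases hc0 : m.coeff 0 = 0
  case neg =>
    -- B is invertible; the projection is 0
    refine ⟨0, fun i j g => by simp [K.zero_mem], by simp, fun i j => by
      simp [Matrix.zero_apply, gaStar_zero], fun x => ?_⟩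
    rw [Matrix.vecMul_zero]
    constructor
    · intro hxA
      have hxB : Matrix.vecMul x B = 0 := by
        rw [hBdef, ← Matrix.vecMul_vecMul, hxA, Matrix.zero_vecMul]
      have h1 := vecMul_aeval hxB mc
      rw [hmB, Matrix.vecMul_zero] at h1
      have hc : mc.coeff 0 ≠ 0 := by
        rw [hmcdef, Polynomial.coeff_map, hcoe]
        exact fun h => hc0 (by exact_mod_cast h)
      exact (smul_vec_eq_zero hc h1.symm).symm
    · intro hx0
      rw [← hx0, Matrix.zero_vecMul]
  case pos =>
  set q : Polynomial K := m.divX with hqdef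
  have hmq : m = Polynomial.X * q := by
    conv_lhs => rw [← Polynomial.X_mul_divX_add m]
    rw [hc0, Polynomial.C_0, add_zero, hqdef]
  have hq0 : q.coeff 0 ≠ 0 := by
    intro hq0
    have hqs : q = Polynomial.X * q.divX := by
      conv_lhs => rw [← Polynomial.X_mul_divX_add q]
      rw [hq0, Polynomial.C_0, add_zero]
    set s : Polynomial K := q.divX with hsdef
    have hms : m = Polynomial.X * (Polynomial.X * s) := by rw [hmq, hqs]
    have hsne : s ≠ 0 := by
      intro h0
      rw [h0, mul_zero, mul_zero] at hms
      exact hmmonic.ne_zero hms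
    have hXs_monic : (Polynomial.X * s).Monic :=
      Polynomial.monic_X.of_mul_monic_left (hms ▸ hmmonic)
    have hann : Polynomial.aeval B ((Polynomial.X * s).map (algebraMap K ℂ)) = 0 := by
      apply matrix_eq_zero_of_vecMul
      intro x
      have e1 : (Polynomial.X * s).map (algebraMap K ℂ)
          = s.map (algebraMap K ℂ) * Polynomial.X := by
        rw [Polynomial.map_mul, Polynomial.map_X, mul_comm]
      have e2 : Polynomial.aeval B ((Polynomial.X * s).map (algebraMap K ℂ))
          = Polynomial.aeval B (s.map (algebraMap K ℂ)) * B := by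
        rw [e1, map_mul, Polynomial.aeval_X]
      rw [e2, ← Matrix.vecMul_vecMul]
      apply vecMul_eq_zero_of_sq hBs
      rw [Matrix.vecMul_vecMul, Matrix.vecMul_vecMul, ← mul_assoc]
      have e3 : Polynomial.aeval B (s.map (algebraMap K ℂ)) * B * B
          = Polynomial.aeval B mc := by
        have e4 : m = s * Polynomial.X * Polynomial.X := by rw [hms]; ring
        rw [hmcdef, e4, Polynomial.map_mul, Polynomial.map_mul, Polynomial.map_X,
          map_mul, map_mul, Polynomial.aeval_X]
      rw [e3, hmB, Matrix.vecMul_zero]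
    have hann2 : Polynomial.aeval B₀ (Polynomial.X * s) = 0 := by
      apply hinj
      rw [map_zero, ← Polynomial.aeval_algHom_apply, hB₀,
        ← Polynomial.aeval_map_algebraMap (A := ℂ)]
      exact hann
    have hmin := minpoly.min K B₀ hXs_monic hann2
    rw [← hmdef] at hmin
    have hle := Polynomial.natDegree_le_natDegree hmin
    have hdm : m.natDegree = 1 + (1 + s.natDegree) := by
      rw [hms, Polynomial.natDegree_mul Polynomial.X_ne_zero
        (mul_ne_zero Polynomial.X_ne_zero hsne),
        Polynomial.natDegree_mul Polynomial.X_ne_zero hsne, Polynomial.natDegree_X]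
    have hds : (Polynomial.X * s).natDegree = 1 + s.natDegree := by
      rw [Polynomial.natDegree_mul Polynomial.X_ne_zero hsne, Polynomial.natDegree_X]
    omega
  -- the projection
  set qc : Polynomial ℂ := q.map (algebraMap K ℂ) with hqcdef
  have hmcq : mc = Polynomial.X * qc := by
    rw [hmcdef, hmq, Polynomial.map_mul, Polynomial.map_X, hqcdef]
  set c : ℂ := qc.coeff 0 with hcdef
  have hcK : c ∈ K := by
    rw [hcdef, hqcdef, Polynomial.coeff_map, hcoe]
    exact SetLike.coe_mem _
  have hcne : c ≠ 0 := by
    rw [hcdef, hqcdef, Polynomial.coeff_map, hcoe]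
    exact fun h => hq0 (by exact_mod_cast h)
  have hqreal : qc.map (starRingEnd ℂ) = qc := by
    have h1 := hreal
    rw [hmcq, Polynomial.map_mul, Polynomial.map_X] at h1
    exact mul_left_cancel₀ Polynomial.X_ne_zero h1
  have hcreal : starRingEnd ℂ c = c := by
    have h1 := congrArg (fun p : Polynomial ℂ => p.coeff 0) hqreal
    simpa [Polynomial.coeff_map] using h1
  set Q : Matrix (Fin n) (Fin n) (MonoidAlgebra ℂ G) := Polynomial.aeval B qc with hQdef
  have hQQ : Q * Q = c • Q := by
    have key : qc * qc = mc * qc.divX + Polynomial.C c * qc := by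
      have h1 : Polynomial.X * qc.divX + Polynomial.C c = qc := Polynomial.X_mul_divX_add qc
      calc qc * qc = (Polynomial.X * qc.divX + Polynomial.C c) * qc := by rw [h1]
        _ = (Polynomial.X * qc) * qc.divX + Polynomial.C c * qc := by ring
        _ = mc * qc.divX + Polynomial.C c * qc := by rw [hmcq]
    have h2 : Q * Q = Polynomial.aeval B (qc * qc) := (map_mul _ _ _).symm
    rw [h2, key, map_add, map_mul, hmB, zero_mul, zero_add, map_mul, Polynomial.aeval_C,
      ← Algebra.smul_def, hQdef]
  have hQK : ∀ i j g, (Q i j).coeff g ∈ K := by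
    intro i j g
    have h1 : Q = φ (Polynomial.aeval B₀ q) := by
      rw [← Polynomial.aeval_algHom_apply, hB₀, hQdef, hqcdef,
        Polynomial.aeval_map_algebraMap]
    rw [h1, hφ]
    exact SetLike.coe_mem _
  have hQs : matStar Q = Q := by
    rw [hQdef, matStar_aeval hBs, hqreal]
  refine ⟨c⁻¹ • Q, ?_, ?_, ?_, ?_⟩
  · intro i j g
    have h1 : ((c⁻¹ • Q) i j).coeff g = c⁻¹ * (Q i j).coeff g := by
      rw [Matrix.smul_apply, MonoidAlgebra.coeff_smul, Finsupp.smul_apply, smul_eq_mul]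
    rw [h1]
    exact K.mul_mem (K.inv_mem hcK) (hQK i j g)
  · rw [Matrix.smul_mul, Matrix.mul_smul, hQQ, smul_smul, smul_smul,
      mul_assoc, inv_mul_cancel₀ hcne, mul_one]
  · intro i j
    have hPs : matStar (c⁻¹ • Q) = c⁻¹ • Q := by
      rw [matStar_smul, hQs, map_inv₀, hcreal]
    calc gaStar ((c⁻¹ • Q) i j) = matStar (c⁻¹ • Q) j i := rfl
      _ = (c⁻¹ • Q) j i := by rw [hPs]
  · intro x
    constructor
    · intro hxA
      have hxB : Matrix.vecMul x B = 0 := by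
        rw [hBdef, ← Matrix.vecMul_vecMul, hxA, Matrix.zero_vecMul]
      have h1 : Matrix.vecMul x Q = c • x := by
        rw [hQdef]
        exact vecMul_aeval hxB qc
      rw [vecMul_smul_mat, h1, smul_smul, inv_mul_cancel₀ hcne, one_smul]
    · intro hxP
      have h1 : Matrix.vecMul x Q = c • x := by
        have h2 := congrArg (fun v : Fin n → MonoidAlgebra ℂ G => c • v) hxP
        rw [← vecMul_smul_mat, smul_smul, mul_inv_cancel₀ hcne, one_smul] at h2
        exact h2
      have e : Q * B = Polynomial.aeval B mc := by
        have e1 : mc = qc * Polynomial.X := by rw [hmcq]; ring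
        rw [e1, map_mul, Polynomial.aeval_X, hQdef]
      have h2 : c • Matrix.vecMul x B = 0 := by
        calc c • Matrix.vecMul x B = Matrix.vecMul (c • x) B := (vecMul_smul_vec c x B).symm
          _ = Matrix.vecMul (Matrix.vecMul x Q) B := by rw [h1]
          _ = Matrix.vecMul x (Q * B) := Matrix.vecMul_vecMul x Q B
          _ = 0 := by rw [e, hmB, Matrix.vecMul_zero]
      have hxB : Matrix.vecMul x B = 0 := smul_vec_eq_zero hcne h2
      rw [hBdef] at hxB
      exact vecMul_A_of_vecMul_B hxB
end
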